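/- Let H be a real Hilbert space, K a convex set in a vector space, and E : K × H → ℝ such that for each fixed φ ∈ K, u ↦ E(φ, u) is concave and of the form E(φ,u) = c − ⟨A_φ u, u⟩ with A_φ bounded self-adjoint positive semidefinite. Consider the alternating iteration: φ^{n+1} ∈ argmin_{φ ∈ K} E(φ, u^n), and u^{n+1} = A_{φ^{n+1}} u^n / ‖A_{φ^{n+1}} u^n‖ (assuming the denominator is nonzero). Then E(φ^{n+1}, u^{n+1}) ≤ E(φ^n, u^n) for all n. -/
import Mathlib


open RealInnerProductSpace

private lemma cs_psd {H : Type*} [NormedAddCommGroup H] [InnerProductSpace ℝ H]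
    (B : H →L[ℝ] H) (hsa : ∀ x y : H, ⟪B x, y⟫ = ⟪x, B y⟫)
    (hpsd : ∀ x : H, 0 ≤ ⟪B x, x⟫) (x y : H) :
    ⟪B x, y⟫ ^ 2 ≤ ⟪B x, x⟫ * ⟪B y, y⟫ := by
  have h : ∀ t : ℝ, 0 ≤ ⟪B y, y⟫ * (t * t) + (2 * ⟪B x, y⟫) * t + ⟪B x, x⟫ := by
    intro t
    have := hpsd (x + t • y)
    have e : ⟪B (x + t • y), x + t • y⟫
        = ⟪B y, y⟫ * (t * t) + (2 * ⟪B x, y⟫) * t + ⟪B x, x⟫ := by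
      have h1 : ⟪B y, x⟫ = ⟪B x, y⟫ := by
        rw [hsa y x, real_inner_comm]
      simp only [map_add, map_smul, inner_add_left, inner_add_right,
        real_inner_smul_left, real_inner_smul_right, h1]
      ring
    linarith [e ▸ this]
  have hd := discrim_le_zero h
  rw [discrim] at hd
  nlinarith [hd]

theorem stmt17 {H F : Type*} [NormedAddCommGroup H] [InnerProductSpace ℝ H]
    [AddCommGroup F] [Module ℝ F]
    (K : Set F) (hK : Convex ℝ K) (c : ℝ) (A : F → H →L[ℝ] H)
    (hsa : ∀ φ ∈ K, ∀ x y : H, ⟪A φ x, y⟫ = ⟪x, A φ y⟫)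
    (hpsd : ∀ φ ∈ K, ∀ x : H, 0 ≤ ⟪A φ x, x⟫)
    (φ : ℕ → F) (u : ℕ → H) (hφK : ∀ n, φ n ∈ K) (hu0 : ‖u 0‖ = 1)
    (hmin : ∀ n, ∀ ψ ∈ K,
      c - ⟪A (φ (n + 1)) (u n), u n⟫ ≤ c - ⟪A ψ (u n), u n⟫)
    (hnz : ∀ n, A (φ (n + 1)) (u n) ≠ 0)
    (hrec : ∀ n, u (n + 1) = ‖A (φ (n + 1)) (u n)‖⁻¹ • A (φ (n + 1)) (u n)) :
    ∀ n, c - ⟪A (φ (n + 1)) (u (n + 1)), u (n + 1)⟫ ≤ c - ⟪A (φ n) (u n), u n⟫ := by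
  -- norms of iterates are 1
  have hnorm : ∀ n, ‖u n‖ = 1 := by
    intro n
    induction n with
    | zero => exact hu0
    | succ n _ =>
      rw [hrec n, norm_smul, norm_inv, norm_norm,
        inv_mul_cancel₀ (norm_ne_zero_iff.mpr (hnz n))]
  intro n
  -- step 1: E(φ^{n+1}, u^n) ≤ E(φ^n, u^n)
  have h1 := hmin n (φ n) (hφK n)
  -- step 2: E(φ^{n+1}, u^{n+1}) ≤ E(φ^{n+1}, u^n)
  set B := A (φ (n + 1)) with hB
  have hBsa := hsa (φ (n+1)) (hφK (n+1))
  have hBpsd := hpsd (φ (n+1)) (hφK (n+1))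
  set v := u n
  have hBv : B v ≠ 0 := hnz n
  have hnBv : (0:ℝ) < ‖B v‖ := norm_pos_iff.mpr hBv
  -- key quantities
  have key : ⟪B v, v⟫ * ‖B v‖ ^ 2 ≤ ⟪B (B v), B v⟫ := by
    by_cases hz : ⟪B v, v⟫ = 0
    · -- then ‖Bv‖⁴ ≤ 0, contradiction
      have hcs := cs_psd B hBsa hBpsd v (B v)
      have e : ⟪B v, B v⟫ = ‖B v‖ ^ 2 := real_inner_self_eq_norm_sq _
      have h4 : (‖B v‖ ^ 2) ^ 2 ≤ 0 := by
        calc (‖B v‖ ^ 2) ^ 2 = ⟪B v, B v⟫ ^ 2 := by rw [e]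
          _ ≤ ⟪B v, v⟫ * ⟪B (B v), B v⟫ := hcs
          _ = 0 := by rw [hz]; ring
      exfalso
      nlinarith [mul_pos hnBv hnBv]
    · have hpos : 0 < ⟪B v, v⟫ := lt_of_le_of_ne (hBpsd v) (Ne.symm hz)
      have hcs := cs_psd B hBsa hBpsd v (B v)
      have e : ⟪B v, B v⟫ = ‖B v‖ ^ 2 := real_inner_self_eq_norm_sq _
      -- Cauchy-Schwarz (ordinary): ⟪Bv, v⟫ ≤ ‖Bv‖
      have hcs2 : ⟪B v, v⟫ ≤ ‖B v‖ := by
        have := real_inner_le_norm (B v) v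
        rw [hnorm n] at this; simpa using this
      have hBBv : 0 ≤ ⟪B (B v), B v⟫ := hBpsd (B v)
      rw [e] at hcs
      have hp2 : ⟪B v, v⟫ ^ 2 ≤ ‖B v‖ ^ 2 := by nlinarith
      have hmul : ⟪B v, v⟫ * (⟪B v, v⟫ * ‖B v‖ ^ 2) ≤ ⟪B v, v⟫ * ⟪B (B v), B v⟫ := by
        nlinarith [sq_nonneg (‖B v‖)]
      exact le_of_mul_le_mul_left hmul hpos
  have h2' : ⟪B v, v⟫ ≤ ‖B v‖⁻¹ * (‖B v‖⁻¹ * ⟪B (B v), B v⟫) := by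
    have h := mul_le_mul_of_nonneg_left key
      (by positivity : (0:ℝ) ≤ ‖B v‖⁻¹ * ‖B v‖⁻¹)
    have hone : ‖B v‖⁻¹ * ‖B v‖⁻¹ * ‖B v‖ ^ 2 = 1 := by
      rw [pow_two]
      field_simp
    calc ⟪B v, v⟫ = (‖B v‖⁻¹ * ‖B v‖⁻¹) * (⟪B v, v⟫ * ‖B v‖ ^ 2) := by
          rw [show (‖B v‖⁻¹ * ‖B v‖⁻¹) * (⟪B v, v⟫ * ‖B v‖ ^ 2)
              = ‖B v‖⁻¹ * ‖B v‖⁻¹ * ‖B v‖ ^ 2 * ⟪B v, v⟫ from by ring, hone, one_mul]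
      _ ≤ (‖B v‖⁻¹ * ‖B v‖⁻¹) * ⟪B (B v), B v⟫ := h
      _ = ‖B v‖⁻¹ * (‖B v‖⁻¹ * ⟪B (B v), B v⟫) := by ring
  have h2 : ⟪B v, v⟫ ≤ ⟪A (φ (n+1)) (u (n+1)), u (n+1)⟫ := by
    rw [hrec n, map_smul, real_inner_smul_left, real_inner_smul_right]
    exact h2'
  have := h1
  linarith
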